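/- Let N ≥ 4 be an integer and Δx, Δt > 0. Let u, U : ℤ → ℝ each satisfy the numerical boundary conditions f(0) = 0, f(−1) = f(1), f(N+1) = f(N−1), f(N+2) = 2 f(N) − f(N−2), and set ū = (u + U)/2 and w = (U − u)/Δt. Suppose that for every n with 1 ≤ n ≤ N the scheme equation δ̃_x² w(n) = −(δ̃_x² ū(n)) (δ_x ū(n)) − δ_x ( ū · δ̃_x² ū )(n) holds, where (ū · δ̃_x² ū)(m) := ū(m) δ̃_x² ū(m). Then H_{1,d}(U) = H_{1,d}(u), where H_{1,d}(f) = Σ''_{n=0}^N (Δx/2) · ( (δ_x^+ f(n))² + (δ_x^- f(n))² ) / 2. -/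

import Mathlib

/-- Forward difference `δ_x^+ f(n) = (f(n+1) − f(n))/Δx`. -/
noncomputable def dxp (Δx : ℝ) (f : ℤ → ℝ) (n : ℤ) : ℝ := (f (n + 1) - f n) / Δx

/-- Backward difference `δ_x^- f(n) = (f(n) − f(n−1))/Δx`. -/
noncomputable def dxm (Δx : ℝ) (f : ℤ → ℝ) (n : ℤ) : ℝ := (f n - f (n - 1)) / Δx

/-- Centered difference `δ_x = (δ_x^+ + δ_x^-)/2`. -/
noncomputable def dxc (Δx : ℝ) (f : ℤ → ℝ) (n : ℤ) : ℝ := (dxp Δx f n + dxm Δx f n) / 2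

/-- Second central difference `δ̃_x² f(n) = (f(n+1) − 2f(n) + f(n−1))/Δx²`. -/
noncomputable def d2x (Δx : ℝ) (f : ℤ → ℝ) (n : ℤ) : ℝ :=
  (f (n + 1) - 2 * f n + f (n - 1)) / Δx ^ 2

/-- Trapezoidal sum `Σ''_{n=0}^N g(n) = g(0)/2 + Σ_{n=1}^{N−1} g(n) + g(N)/2`. -/
noncomputable def trapSum (N : ℤ) (g : ℤ → ℝ) : ℝ :=
  g 0 / 2 + (∑ n ∈ Finset.Ico (1 : ℤ) N, g n) + g N / 2

/-- The discrete Hamiltonian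
`H_{1,d}(f) = Σ''_{n=0}^N (Δx/2)·((δ_x^+ f(n))² + (δ_x^- f(n))²)/2`. -/
noncomputable def H1d (Δx : ℝ) (N : ℤ) (f : ℤ → ℝ) : ℝ :=
  trapSum N (fun n => (Δx / 2) * ((dxp Δx f n) ^ 2 + (dxm Δx f n) ^ 2) / 2)

/- ### Auxiliary summation lemmas over `Finset.Ico` in `ℤ` -/

lemma zIco_succ_right (a b : ℤ) (h : a ≤ b) :
    Finset.Ico a (b + 1) = insert b (Finset.Ico a b) := by
  ext x; simp [Finset.mem_Ico]; omega

lemma zsum_Ico_succ_top (a b : ℤ) (h : a ≤ b) (f : ℤ → ℝ) :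
    ∑ n ∈ Finset.Ico a (b + 1), f n = (∑ n ∈ Finset.Ico a b, f n) + f b := by
  rw [zIco_succ_right a b h, Finset.sum_insert (by simp)]
  ring

lemma zsum_Ico_bot (a b : ℤ) (h : a < b) (f : ℤ → ℝ) :
    ∑ n ∈ Finset.Ico a b, f n = f a + ∑ n ∈ Finset.Ico (a + 1) b, f n := by
  have : Finset.Ico a b = insert a (Finset.Ico (a+1) b) := by
    ext x; simp [Finset.mem_Ico]; omega
  rw [this, Finset.sum_insert (by simp)]

lemma zsum_shift (a b : ℤ) (f : ℤ → ℝ) :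
    ∑ n ∈ Finset.Ico a b, f (n - 1) = ∑ n ∈ Finset.Ico (a - 1) (b - 1), f n := by
  rw [show Finset.Ico (a-1) (b-1)
      = (Finset.Ico a b).map ⟨fun x => x - 1, fun x y h => by dsimp at h; omega⟩ by
    ext x; simp only [Finset.mem_map, Finset.mem_Ico, Function.Embedding.coeFn_mk]
    constructor
    · intro hx; exact ⟨x + 1, by omega, by show x + 1 - 1 = x; ring⟩
    · rintro ⟨y, hy, rfl⟩; show a - 1 ≤ y - 1 ∧ y - 1 < b - 1; omega]
  rw [Finset.sum_map]
  rfl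

lemma ztelescope (F : ℤ → ℝ) (a : ℤ) : ∀ b, a ≤ b →
    ∑ n ∈ Finset.Ico a b, (F n - F (n - 1)) = F (b - 1) - F (a - 1) := by
  refine Int.le_induction ?_ ?_
  · simp
  · intro b hb ih
    rw [zsum_Ico_succ_top a b hb, ih, show b + 1 - 1 = b from by ring]
    ring

/- ### Telescoping auxiliary functions -/

noncomputable def auxF1 (Δx : ℝ) (v w : ℤ → ℝ) (n : ℤ) : ℝ :=
  (w (n+1) - w n) * v (n+1) / Δx ^ 2

noncomputable def auxF2 (Δx : ℝ) (v : ℤ → ℝ) (n : ℤ) : ℝ :=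
  (v n * d2x Δx v n * v (n+1) + v n * (v (n+1) * d2x Δx v (n+1))) / (2 * Δx)

/-- The core vanishing lemma: under the boundary conditions and the scheme,
the discrete "energy production" sum vanishes. -/
lemma main_sum (Δx : ℝ) (N : ℤ) (hN : 4 ≤ N) (v w : ℤ → ℝ)
    (hv0 : v 0 = 0) (hv2 : v (N+1) = v (N-1)) (hw2 : w (N+1) = w (N-1))
    (hv3 : v (N+2) = 2 * v N - v (N-2))
    (hs : ∀ n : ℤ, 1 ≤ n → n ≤ N →
      d2x Δx w n = -(d2x Δx v n) * dxc Δx v n - dxc Δx (fun m => v m * d2x Δx v m) n) :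
    ∑ n ∈ Finset.Ico (0:ℤ) N, dxp Δx v n * dxp Δx w n = 0 := by
  have h0N : (0:ℤ) < N := by omega
  have h1N : (1:ℤ) ≤ N := by omega
  -- pointwise summation-by-parts identity
  have hpt1 : ∀ n : ℤ, dxp Δx v n * dxp Δx w n
      = (auxF1 Δx v w n - auxF1 Δx v w (n-1)) - v n * d2x Δx w n := by
    intro n
    simp only [auxF1, dxp, d2x, show n-1+1 = n from by ring]
    ring
  have t1 : ∑ n ∈ Finset.Ico (0:ℤ) N, (auxF1 Δx v w n - auxF1 Δx v w (n-1))
      = auxF1 Δx v w (N-1) - auxF1 Δx v w (0-1) :=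
    ztelescope (auxF1 Δx v w) 0 N (le_of_lt h0N)
  have hF1m1 : auxF1 Δx v w (0-1) = 0 := by
    simp only [auxF1, show (0:ℤ)-1+1 = 0 from by ring]
    rw [hv0]; ring
  have split0 : ∑ n ∈ Finset.Ico (0:ℤ) N, v n * d2x Δx w n
      = v 0 * d2x Δx w 0 + ∑ n ∈ Finset.Ico (1:ℤ) N, v n * d2x Δx w n := by
    have := zsum_Ico_bot 0 N h0N (fun n => v n * d2x Δx w n)
    rwa [show (0:ℤ)+1 = 1 from by norm_num] at this
  -- pointwise telescoping for the scheme right-hand side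
  have hpt2 : ∀ n : ℤ, v n * (-(d2x Δx v n) * dxc Δx v n - dxc Δx (fun m => v m * d2x Δx v m) n)
      = -(auxF2 Δx v n - auxF2 Δx v (n-1)) := by
    intro n
    simp only [auxF2, dxc, dxp, dxm, d2x,
      show n-1+1 = n from by ring, show n+1-1 = n from by ring,
      show n-1-1 = n-2 from by ring, show n+1+1 = n+2 from by ring]
    ring
  have hsub : ∑ n ∈ Finset.Ico (1:ℤ) N, v n * d2x Δx w n
      = -(auxF2 Δx v (N-1) - auxF2 Δx v (1-1)) := by
    have step : ∑ n ∈ Finset.Ico (1:ℤ) N, v n * d2x Δx w n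
        = ∑ n ∈ Finset.Ico (1:ℤ) N, (-(auxF2 Δx v n - auxF2 Δx v (n-1))) := by
      refine Finset.sum_congr rfl fun n hn => ?_
      rw [Finset.mem_Ico] at hn
      rw [hs n hn.1 (le_of_lt hn.2)]
      exact hpt2 n
    rw [step, Finset.sum_neg_distrib, ztelescope (auxF2 Δx v) 1 N h1N]
  have hF20 : auxF2 Δx v (1-1) = 0 := by
    rw [show (1:ℤ)-1 = 0 from by norm_num]
    simp only [auxF2]
    rw [hv0]; ring
  -- assemble
  have hmain : ∑ n ∈ Finset.Ico (0:ℤ) N, dxp Δx v n * dxp Δx w n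
      = auxF1 Δx v w (N-1) + auxF2 Δx v (N-1) := by
    calc ∑ n ∈ Finset.Ico (0:ℤ) N, dxp Δx v n * dxp Δx w n
        = ∑ n ∈ Finset.Ico (0:ℤ) N,
            ((auxF1 Δx v w n - auxF1 Δx v w (n-1)) - v n * d2x Δx w n) :=
          Finset.sum_congr rfl fun n _ => hpt1 n
      _ = (∑ n ∈ Finset.Ico (0:ℤ) N, (auxF1 Δx v w n - auxF1 Δx v w (n-1)))
            - ∑ n ∈ Finset.Ico (0:ℤ) N, v n * d2x Δx w n := Finset.sum_sub_distrib _ _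
      _ = auxF1 Δx v w (N-1) + auxF2 Δx v (N-1) := by
          rw [t1, hF1m1, split0, hsub, hF20, hv0]; ring
  rw [hmain]
  -- boundary computation
  have hF1N : auxF1 Δx v w (N-1)
      = (1/2) * (v N * (d2x Δx v N * dxc Δx v N
          + dxc Δx (fun m => v m * d2x Δx v m) N)) := by
    have e : auxF1 Δx v w (N-1) = -(1/2) * (v N * d2x Δx w N) := by
      simp only [auxF1, d2x, show N-1+1 = N from by ring]
      rw [hw2]; ring
    rw [e, hs N (by omega) le_rfl]; ring
  have hlast : auxF2 Δx v (N-1)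
      = -((1/2) * (v N * (d2x Δx v N * dxc Δx v N
          + dxc Δx (fun m => v m * d2x Δx v m) N))) := by
    simp only [auxF2, dxc, dxp, dxm, d2x,
      show N-1+1 = N from by ring, show N+1-1 = N from by ring,
      show N-1-1 = N-2 from by ring, show N+1+1 = N+2 from by ring]
    rw [hv2, hv3]; ring
  rw [hF1N, hlast]; ring

/-- Step A: the difference of Hamiltonians equals the energy production sum. -/
lemma stepA (Δx Δt : ℝ) (N : ℤ) (hN : 4 ≤ N) (u U v w : ℤ → ℝ)
    (hU : ∀ m, U m = v m + (Δt/2) * w m) (hu : ∀ m, u m = v m - (Δt/2) * w m)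
    (hv0 : v 0 = 0) (hw0 : w 0 = 0) (hv1 : v (-1) = v 1) (hw1 : w (-1) = w 1)
    (hv2 : v (N+1) = v (N-1)) (hw2 : w (N+1) = w (N-1)) :
    H1d Δx N U - H1d Δx N u
      = Δx * Δt * ∑ n ∈ Finset.Ico (0:ℤ) N, dxp Δx v n * dxp Δx w n := by
  have hq : ∀ n : ℤ, (Δx / 2) * ((dxp Δx U n) ^ 2 + (dxm Δx U n) ^ 2) / 2
      - (Δx / 2) * ((dxp Δx u n) ^ 2 + (dxm Δx u n) ^ 2) / 2
      = (Δx*Δt/2) * (dxp Δx v n * dxp Δx w n + dxp Δx v (n-1) * dxp Δx w (n-1)) := by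
    intro n
    simp only [dxp, dxm, hU, hu, show n-1+1 = n from by ring]
    ring
  have e2 : ∑ n ∈ Finset.Ico (1:ℤ) N, dxp Δx v n * dxp Δx w n
      = (∑ n ∈ Finset.Ico (0:ℤ) N, dxp Δx v n * dxp Δx w n)
        - dxp Δx v 0 * dxp Δx w 0 := by
    have := zsum_Ico_bot 0 N (by omega) (fun n => dxp Δx v n * dxp Δx w n)
    rw [show (0:ℤ)+1 = 1 from by norm_num] at this
    linarith
  have e1 : ∑ n ∈ Finset.Ico (1:ℤ) N, dxp Δx v (n-1) * dxp Δx w (n-1)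
      = ∑ n ∈ Finset.Ico (0:ℤ) (N-1), dxp Δx v n * dxp Δx w n := by
    have := zsum_shift 1 N (fun n => dxp Δx v n * dxp Δx w n)
    rwa [show (1:ℤ)-1 = 0 from by norm_num] at this
  have e3 : ∑ n ∈ Finset.Ico (0:ℤ) (N-1), dxp Δx v n * dxp Δx w n
      = (∑ n ∈ Finset.Ico (0:ℤ) N, dxp Δx v n * dxp Δx w n)
        - dxp Δx v (N-1) * dxp Δx w (N-1) := by
    have := zsum_Ico_succ_top 0 (N-1) (by omega) (fun n => dxp Δx v n * dxp Δx w n)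
    rw [show N-1+1 = N from by ring] at this
    linarith
  have ebc1 : dxp Δx v (-1) * dxp Δx w (-1) = dxp Δx v 0 * dxp Δx w 0 := by
    simp only [dxp, show (-1:ℤ)+1 = 0 from by norm_num, show (0:ℤ)+1 = 1 from by norm_num]
    rw [hv0, hv1, hw0, hw1]; ring
  have ebc2 : dxp Δx v N * dxp Δx w N = dxp Δx v (N-1) * dxp Δx w (N-1) := by
    simp only [dxp, show N-1+1 = N from by ring]
    rw [hv2, hw2]; ring
  have hq0 := hq 0
  rw [show (0:ℤ)-1 = -1 from by norm_num] at hq0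
  have hqN := hq N
  have hsum : (∑ n ∈ Finset.Ico (1:ℤ) N,
        (Δx / 2) * ((dxp Δx U n) ^ 2 + (dxm Δx U n) ^ 2) / 2)
      - ∑ n ∈ Finset.Ico (1:ℤ) N,
        (Δx / 2) * ((dxp Δx u n) ^ 2 + (dxm Δx u n) ^ 2) / 2
      = (Δx*Δt/2) * (((∑ n ∈ Finset.Ico (0:ℤ) N, dxp Δx v n * dxp Δx w n)
            - dxp Δx v 0 * dxp Δx w 0)
          + ((∑ n ∈ Finset.Ico (0:ℤ) N, dxp Δx v n * dxp Δx w n)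
            - dxp Δx v (N-1) * dxp Δx w (N-1))) := by
    rw [← Finset.sum_sub_distrib]
    rw [Finset.sum_congr rfl fun n _ => hq n]
    rw [← Finset.mul_sum, Finset.sum_add_distrib, e1, e2, e3]
  simp only [H1d, trapSum]
  linear_combination (1/2)*hq0 + (1/2)*hqN + hsum + (Δx*Δt/4)*ebc1 + (Δx*Δt/4)*ebc2

/-- The fully discrete `H₁`-preserving scheme for the Hunter–Saxton equation on
`[−L,L]` conserves the discrete Hamiltonian `H_{1,d}` from one time level (`u`) to the
next (`U`). -/
theorem stmt_17 (N : ℤ) (hN : 4 ≤ N) (Δx Δt : ℝ) (hΔx : 0 < Δx) (hΔt : 0 < Δt)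
    (u U : ℤ → ℝ)
    (hbu0 : u 0 = 0) (hbu1 : u (-1) = u 1)
    (hbu2 : u (N + 1) = u (N - 1)) (hbu3 : u (N + 2) = 2 * u N - u (N - 2))
    (hbU0 : U 0 = 0) (hbU1 : U (-1) = U 1)
    (hbU2 : U (N + 1) = U (N - 1)) (hbU3 : U (N + 2) = 2 * U N - U (N - 2))
    (hscheme : ∀ n : ℤ, 1 ≤ n → n ≤ N →
      d2x Δx (fun m => (U m - u m) / Δt) n
        = -(d2x Δx (fun m => (u m + U m) / 2) n)
            * dxc Δx (fun m => (u m + U m) / 2) n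
          - dxc Δx
              (fun m => ((u m + U m) / 2) * d2x Δx (fun k => (u k + U k) / 2) m) n) :
    H1d Δx N U = H1d Δx N u := by
  have hv0 : (fun m => (u m + U m) / 2) 0 = 0 := by simp [hbu0, hbU0]
  have hw0 : (fun m => (U m - u m) / Δt) 0 = 0 := by simp [hbu0, hbU0]
  have hv1 : (fun m => (u m + U m) / 2) (-1) = (fun m => (u m + U m) / 2) 1 := by
    simp only [hbu1, hbU1]
  have hw1 : (fun m => (U m - u m) / Δt) (-1) = (fun m => (U m - u m) / Δt) 1 := by
    simp only [hbu1, hbU1]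
  have hv2 : (fun m => (u m + U m) / 2) (N+1) = (fun m => (u m + U m) / 2) (N-1) := by
    simp only [hbu2, hbU2]
  have hw2 : (fun m => (U m - u m) / Δt) (N+1) = (fun m => (U m - u m) / Δt) (N-1) := by
    simp only [hbu2, hbU2]
  have hv3 : (fun m => (u m + U m) / 2) (N+2)
      = 2 * (fun m => (u m + U m) / 2) N - (fun m => (u m + U m) / 2) (N-2) := by
    simp only [hbu3, hbU3]; ring
  have hU : ∀ m, U m = (fun m => (u m + U m) / 2) m
      + (Δt/2) * (fun m => (U m - u m) / Δt) m := by
    intro m; simp only; field_simp; ring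
  have hu : ∀ m, u m = (fun m => (u m + U m) / 2) m
      - (Δt/2) * (fun m => (U m - u m) / Δt) m := by
    intro m; simp only; field_simp; ring
  have key := main_sum Δx N hN (fun m => (u m + U m) / 2) (fun m => (U m - u m) / Δt)
    hv0 hv2 hw2 hv3 (fun n h1 h2 => hscheme n h1 h2)
  have hA := stepA Δx Δt N hN u U (fun m => (u m + U m) / 2) (fun m => (U m - u m) / Δt)
    hU hu hv0 hw0 hv1 hw1 hv2 hw2
  rw [key] at hA
  have : H1d Δx N U - H1d Δx N u = 0 := by rw [hA]; ring
  linarith
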